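/- Assume: (C4) β* ≠ 0; the gradient bound (1/n)‖X̃ᵀε̃‖_∞ ≤ δ/4 holds; and 0 < γ < δ/(16·r·‖β*‖_∞). Then for any A ∈ 𝒜, every minimizer β̂(A) of (1/(2n))‖ỹ − X̃β‖₂² + δ‖β‖₁ + (γ/2)‖Aβ‖₂² satisfies β̂(A) − β* ∈ C, i.e. ‖(β̂(A) − β*)_{M⊥}‖₁ ≤ 3‖(β̂(A) − β*)_M‖₁. -/

import Mathlib

open Matrix Finset MeasureTheory ProbabilityTheory Filter
open scoped Kronecker ENNReal Topology

noncomputable section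

/-- squared Euclidean (ℓ2) norm of a finite real vector -/
def l2sq {ι : Type*} [Fintype ι] (v : ι → ℝ) : ℝ := ∑ i, (v i) ^ 2

/-- ℓ1 norm of a finite real vector -/
def l1 {ι : Type*} [Fintype ι] (v : ι → ℝ) : ℝ := ∑ i, |v i|

/-- ℓ∞ (max-absolute-entry) norm of a finite real vector -/
def linf {ι : Type*} [Fintype ι] (v : ι → ℝ) : ℝ := ⨆ i, |v i|

/-- index type for ordered pairs (l, m) with l ≠ m; has cardinality r(r-1) -/
abbrev PairIdx (r : ℕ) := {lm : Fin r × Fin r // lm.1 ≠ lm.2}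

/-- The set 𝒜 of matrices A ∈ {-1,0,1}^{r(r-1)p × pr} such that
‖Aβ‖₂² = Σ_l Σ_{m ≠ l} ‖β_l - d_{lm} β_m‖₂² for some d_{lm} ∈ {-1,0,1}. -/
def calA (p r : ℕ) : Set (Matrix (PairIdx r × Fin p) (Fin r × Fin p) ℝ) :=
  { A | (∀ i j, A i j = -1 ∨ A i j = 0 ∨ A i j = 1) ∧
      ∃ d : Fin r → Fin r → ℝ,
        (∀ l m, d l m = -1 ∨ d l m = 0 ∨ d l m = 1) ∧
        ∀ β : Fin r × Fin p → ℝ,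
          l2sq (A.mulVec β) =
            ∑ l : Fin r, ∑ m ∈ Finset.univ.filter (fun m => m ≠ l),
              ∑ j : Fin p, (β (l, j) - d l m * β (m, j)) ^ 2 }

/-- X̃ = I_r ⊗ X -/
def Xtil {n p : ℕ} (r : ℕ) (X : Matrix (Fin n) (Fin p) ℝ) :
    Matrix (Fin r × Fin n) (Fin r × Fin p) ℝ :=
  (1 : Matrix (Fin r) (Fin r) ℝ) ⊗ₖ X

/-- MinPen objective for fixed A:
(1/(2n))‖ỹ - X̃β‖₂² + δ‖β‖₁ + (γ/2)‖Aβ‖₂². -/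
def obj {n p r : ℕ} (δ γ : ℝ) (ytil : Fin r × Fin n → ℝ)
    (Xt : Matrix (Fin r × Fin n) (Fin r × Fin p) ℝ)
    (A : Matrix (PairIdx r × Fin p) (Fin r × Fin p) ℝ)
    (β : Fin r × Fin p → ℝ) : ℝ :=
  (1 / (2 * (n : ℝ))) * l2sq (fun i => ytil i - Xt.mulVec β i)
    + δ * l1 β + (γ / 2) * l2sq (A.mulVec β)

/-- the cone C = { a : ‖a_{M⊥}‖₁ ≤ 3‖a_M‖₁ } where M is the support of β* -/
def coneC {p r : ℕ} (βstar : Fin r × Fin p → ℝ) : Set (Fin r × Fin p → ℝ) :=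
  { a | l1 ((Function.support βstar)ᶜ.indicator a) ≤
        3 * l1 ((Function.support βstar).indicator a) }

lemma l2sq_nonneg' {ι : Type*} [Fintype ι] (v : ι → ℝ) : 0 ≤ l2sq v :=
  Finset.sum_nonneg fun i _ => sq_nonneg _

lemma l1_nonneg' {ι : Type*} [Fintype ι] (v : ι → ℝ) : 0 ≤ l1 v :=
  Finset.sum_nonneg fun i _ => abs_nonneg _

lemma l2sq_sub' {ι : Type*} [Fintype ι] (a b : ι → ℝ) :
    l2sq (fun i => a i - b i) = l2sq a - 2 * ∑ i, a i * b i + l2sq b := by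
  simp only [l2sq, Finset.mul_sum]
  rw [← Finset.sum_sub_distrib, ← Finset.sum_add_distrib]
  exact Finset.sum_congr rfl fun i _ => by ring

lemma sum_abs_pair {r p : ℕ} (c : ℝ) (g : Fin r × Fin p → ℝ) :
    (∑ l : Fin r, ∑ m : Fin r, ∑ j : Fin p, c * (|g (l, j)| + |g (m, j)|))
      = 2 * (r : ℝ) * c * l1 g := by
  have hl1 : l1 g = ∑ l : Fin r, ∑ j : Fin p, |g (l, j)| := by
    rw [l1, Fintype.sum_prod_type]
  have inner : ∀ l m : Fin r, (∑ j : Fin p, c * (|g (l, j)| + |g (m, j)|))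
      = c * (∑ j : Fin p, |g (l, j)|) + c * ∑ j : Fin p, |g (m, j)| := by
    intro l m
    simp only [mul_add, Finset.sum_add_distrib, Finset.mul_sum]
  have mid : ∀ l : Fin r, (∑ m : Fin r, ∑ j : Fin p, c * (|g (l, j)| + |g (m, j)|))
      = (r : ℝ) * (c * ∑ j : Fin p, |g (l, j)|)
        + c * ∑ m : Fin r, ∑ j : Fin p, |g (m, j)| := by
    intro l
    simp only [inner]
    rw [Finset.sum_add_distrib, Finset.sum_const, Finset.card_univ, Fintype.card_fin,
      nsmul_eq_mul, ← Finset.mul_sum]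
  simp only [mid]
  rw [Finset.sum_add_distrib, Finset.sum_const, Finset.card_univ, Fintype.card_fin,
    nsmul_eq_mul, hl1, ← Finset.mul_sum]
  ring_nf
  rw [← Finset.mul_sum]
  ring

lemma l2sq_add' {ι : Type*} [Fintype ι] (a b : ι → ℝ) :
    l2sq (a + b) = l2sq a + 2 * ∑ i, a i * b i + l2sq b := by
  simp only [l2sq, Pi.add_apply, Finset.mul_sum]
  rw [← Finset.sum_add_distrib, ← Finset.sum_add_distrib]
  exact Finset.sum_congr rfl fun i _ => by ring

set_option maxHeartbeats 1000000 in
/-- Cone membership: under β* ≠ 0, the gradient bound (1/n)‖X̃ᵀε̃‖_∞ ≤ δ/4 and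
0 < γ < δ/(16r‖β*‖_∞), every minimizer β̂(A) satisfies β̂(A) - β* ∈ C, i.e.
‖(β̂(A) - β*)_{M⊥}‖₁ ≤ 3‖(β̂(A) - β*)_M‖₁. -/
theorem statement13 (n p r : ℕ)
    (X : Matrix (Fin n) (Fin p) ℝ)
    (βstar : Fin r × Fin p → ℝ)
    (εt : Fin r × Fin n → ℝ)
    (δ γ : ℝ)
    -- Condition (C4): β* ≠ 0
    (hC4 : βstar ≠ 0)
    -- gradient bound (1/n)‖X̃ᵀε̃‖_∞ ≤ δ/4
    (hgrad : ∀ j, (1 / (n : ℝ)) * |(Xtil r X)ᵀ.mulVec εt j| ≤ δ / 4)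
    -- tuning parameter condition 0 < γ < δ/(16 r ‖β*‖_∞)
    (hγpos : 0 < γ) (hγ : γ < δ / (16 * (r : ℝ) * linf βstar)) :
    ∀ A ∈ calA p r, ∀ βhat : Fin r × Fin p → ℝ,
      (∀ β : Fin r × Fin p → ℝ,
        obj δ γ (fun ik => (Xtil r X).mulVec βstar ik + εt ik) (Xtil r X) A βhat ≤
        obj δ γ (fun ik => (Xtil r X).mulVec βstar ik + εt ik) (Xtil r X) A β) →
      (fun j => βhat j - βstar j) ∈ coneC βstar := by
  intro A hA βhat hmin
  obtain ⟨hent, d, hd, hQ⟩ := hA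
  set h : Fin r × Fin p → ℝ := fun j => βhat j - βstar j with hh
  have hβ : βhat = βstar + h := by funext j; simp [hh]
  -- positivity facts
  obtain ⟨j0, hj0⟩ : ∃ j, βstar j ≠ 0 := by
    by_contra hc; push_neg at hc; exact hC4 (funext hc)
  set B := linf βstar with hB
  have hBub : ∀ j, |βstar j| ≤ B := by
    intro j
    rw [hB]
    exact le_ciSup (Set.Finite.bddAbove (Set.finite_range fun i => |βstar i|)) j
  have hBpos : 0 < B := lt_of_lt_of_le (abs_pos.mpr hj0) (hBub j0)
  have hrpos : (0:ℝ) < r := by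
    have : 0 < r := j0.1.pos
    exact_mod_cast this
  have h16 : (0:ℝ) < 16 * (r : ℝ) * B := by positivity
  have hγB : γ * (16 * (r:ℝ) * B) < δ := (lt_div_iff₀ h16).mp hγ
  have hδpos : 0 < δ := lt_of_le_of_lt (by positivity) hγB
  have hl1h : 0 ≤ l1 h := l1_nonneg' h
  -- notation
  set Xt := Xtil r X with hXt
  set w := Xt.mulVec h with hw
  set v := Xtᵀ.mulVec εt with hv
  set S : ℝ := ∑ l : Fin r, ∑ m ∈ Finset.univ.filter (fun m => m ≠ l),
      ∑ j : Fin p, (βstar (l, j) - d l m * βstar (m, j)) * (h (l, j) - d l m * h (m, j)) with hS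
  set T : ℝ := ∑ i, A.mulVec βstar i * A.mulVec h i with hT
  set ipv : ℝ := ∑ jj, v jj * h jj with hipv
  -- key inequality from minimality
  have hkey := hmin βstar
  simp only [obj] at hkey
  have hres1 : (fun i => ((Xt.mulVec βstar i + εt i) - Xt.mulVec βhat i)) =
      fun i => εt i - w i := by
    funext i
    rw [hβ, Matrix.mulVec_add]
    simp only [Pi.add_apply]
    ring_nf
    rfl
  have hres2 : (fun i => ((Xt.mulVec βstar i + εt i) - Xt.mulVec βstar i)) = εt := by
    funext i; ring
  rw [hres1, hres2, l2sq_sub'] at hkey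
  have hip : ∑ i, εt i * w i = ipv := by
    have : εt ⬝ᵥ Xt.mulVec h = Xtᵀ.mulVec εt ⬝ᵥ h := by
      rw [Matrix.dotProduct_mulVec, Matrix.mulVec_transpose]
    simpa [dotProduct, hw, hv, hipv] using this
  rw [hip] at hkey
  -- A-term expansion
  have hA2 : l2sq (A.mulVec βhat) = l2sq (A.mulVec βstar) + 2 * T + l2sq (A.mulVec h) := by
    rw [hβ, Matrix.mulVec_add, l2sq_add']
  rw [hA2] at hkey
  -- polarization: T = S
  have hTS : T = S := by
    have e1 := hQ βhat
    have e2 := hQ βstar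
    have e3 := hQ h
    have expand : (∑ l : Fin r, ∑ m ∈ Finset.univ.filter (fun m => m ≠ l),
        ∑ j : Fin p, (βhat (l, j) - d l m * βhat (m, j)) ^ 2) =
        (∑ l : Fin r, ∑ m ∈ Finset.univ.filter (fun m => m ≠ l),
          ∑ j : Fin p, (βstar (l, j) - d l m * βstar (m, j)) ^ 2) +
        (∑ l : Fin r, ∑ m ∈ Finset.univ.filter (fun m => m ≠ l),
          ∑ j : Fin p, (h (l, j) - d l m * h (m, j)) ^ 2) + 2 * S := by
      simp only [hS, Finset.mul_sum, ← Finset.sum_add_distrib]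
      refine Finset.sum_congr rfl fun l _ => Finset.sum_congr rfl fun m _ =>
        Finset.sum_congr rfl fun j _ => ?_
      rw [hβ]; simp only [Pi.add_apply]; ring
    rw [hA2, e2, e3] at e1
    rw [expand] at e1
    linarith
  -- gradient bound on the inner product term
  have hn0 : (0:ℝ) ≤ 1 / (n:ℝ) := by positivity
  have hipb : (1 / (n:ℝ)) * ipv ≤ (δ / 4) * l1 h := by
    rw [hipv, Finset.mul_sum, hh]
    rw [l1, Finset.mul_sum]
    refine Finset.sum_le_sum fun j _ => ?_
    have h1 : v j * (βhat j - βstar j) ≤ |v j| * |βhat j - βstar j| := by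
      calc v j * (βhat j - βstar j) ≤ |v j * (βhat j - βstar j)| := le_abs_self _
        _ = |v j| * |βhat j - βstar j| := abs_mul _ _
    calc (1 / (n:ℝ)) * (v j * (βhat j - βstar j))
        ≤ (1 / (n:ℝ)) * (|v j| * |βhat j - βstar j|) :=
          mul_le_mul_of_nonneg_left h1 hn0
      _ = ((1 / (n:ℝ)) * |v j|) * |βhat j - βstar j| := by ring
      _ ≤ (δ / 4) * |βhat j - βstar j| :=
          mul_le_mul_of_nonneg_right (hgrad j) (abs_nonneg _)
  -- bound on S
  have hSbound : |S| ≤ 4 * (r:ℝ) * B * l1 h := by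
    have habs_d : ∀ l m, |d l m| ≤ 1 := by
      intro l m; rcases hd l m with h' | h' | h' <;> simp [h']
    have term_bound : ∀ l m j, |(βstar (l, j) - d l m * βstar (m, j)) *
        (h (l, j) - d l m * h (m, j))| ≤ 2 * B * (|h (l, j)| + |h (m, j)|) := by
      intro l m j
      rw [abs_mul]
      have b1 : |βstar (l, j) - d l m * βstar (m, j)| ≤ 2 * B := by
        calc |βstar (l, j) - d l m * βstar (m, j)|
            ≤ |βstar (l, j)| + |d l m * βstar (m, j)| := abs_sub _ _
          _ = |βstar (l, j)| + |d l m| * |βstar (m, j)| := by rw [abs_mul]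
          _ ≤ B + 1 * B := by
              have := hBub (l, j); have := hBub (m, j); have := habs_d l m
              have hb : |d l m| * |βstar (m, j)| ≤ 1 * B :=
                mul_le_mul (habs_d l m) (hBub (m, j)) (abs_nonneg _) zero_le_one
              linarith [hBub (l, j)]
          _ = 2 * B := by ring
      have b2 : |h (l, j) - d l m * h (m, j)| ≤ |h (l, j)| + |h (m, j)| := by
        calc |h (l, j) - d l m * h (m, j)|
            ≤ |h (l, j)| + |d l m * h (m, j)| := abs_sub _ _
          _ = |h (l, j)| + |d l m| * |h (m, j)| := by rw [abs_mul]
          _ ≤ |h (l, j)| + 1 * |h (m, j)| :=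
              add_le_add_right (mul_le_mul_of_nonneg_right (habs_d l m) (abs_nonneg _)) _
          _ = |h (l, j)| + |h (m, j)| := by ring
      calc |βstar (l, j) - d l m * βstar (m, j)| * |h (l, j) - d l m * h (m, j)|
          ≤ (2 * B) * (|h (l, j)| + |h (m, j)|) :=
            mul_le_mul b1 b2 (abs_nonneg _) (by positivity)
        _ = 2 * B * (|h (l, j)| + |h (m, j)|) := rfl
    have hl1split : ∀ f : Fin r × Fin p → ℝ, l1 f = ∑ l : Fin r, ∑ j : Fin p, |f (l, j)| := by
      intro f; rw [l1, Fintype.sum_prod_type]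
    have step1 : |S| ≤ ∑ l : Fin r, ∑ m ∈ Finset.univ.filter (fun m => m ≠ l),
        ∑ j : Fin p, 2 * B * (|h (l, j)| + |h (m, j)|) := by
      rw [hS]
      calc |∑ l : Fin r, ∑ m ∈ Finset.univ.filter (fun m => m ≠ l),
            ∑ j : Fin p, (βstar (l, j) - d l m * βstar (m, j)) * (h (l, j) - d l m * h (m, j))|
          ≤ ∑ l : Fin r, |∑ m ∈ Finset.univ.filter (fun m => m ≠ l),
            ∑ j : Fin p, (βstar (l, j) - d l m * βstar (m, j)) * (h (l, j) - d l m * h (m, j))| :=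
            Finset.abs_sum_le_sum_abs _ _
        _ ≤ ∑ l : Fin r, ∑ m ∈ Finset.univ.filter (fun m => m ≠ l),
            |∑ j : Fin p, (βstar (l, j) - d l m * βstar (m, j)) * (h (l, j) - d l m * h (m, j))| :=
            Finset.sum_le_sum fun l _ => Finset.abs_sum_le_sum_abs _ _
        _ ≤ ∑ l : Fin r, ∑ m ∈ Finset.univ.filter (fun m => m ≠ l),
            ∑ j : Fin p, |(βstar (l, j) - d l m * βstar (m, j)) * (h (l, j) - d l m * h (m, j))| :=
            Finset.sum_le_sum fun l _ => Finset.sum_le_sum fun m _ =>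
              Finset.abs_sum_le_sum_abs _ _
        _ ≤ _ := Finset.sum_le_sum fun l _ => Finset.sum_le_sum fun m _ =>
              Finset.sum_le_sum fun j _ => term_bound l m j
    have step2 : (∑ l : Fin r, ∑ m ∈ Finset.univ.filter (fun m => m ≠ l),
        ∑ j : Fin p, 2 * B * (|h (l, j)| + |h (m, j)|)) ≤ 4 * (r:ℝ) * B * l1 h := by
      have inner : ∀ l : Fin r, (∑ m ∈ Finset.univ.filter (fun m => m ≠ l),
          ∑ j : Fin p, 2 * B * (|h (l, j)| + |h (m, j)|)) ≤
          ∑ m : Fin r, ∑ j : Fin p, 2 * B * (|h (l, j)| + |h (m, j)|) := by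
        intro l
        refine Finset.sum_le_sum_of_subset_of_nonneg (Finset.filter_subset _ _) ?_
        intro m _ _
        exact Finset.sum_nonneg fun j _ => by positivity
      calc (∑ l : Fin r, ∑ m ∈ Finset.univ.filter (fun m => m ≠ l),
            ∑ j : Fin p, 2 * B * (|h (l, j)| + |h (m, j)|))
          ≤ ∑ l : Fin r, ∑ m : Fin r, ∑ j : Fin p, 2 * B * (|h (l, j)| + |h (m, j)|) :=
            Finset.sum_le_sum fun l _ => inner l
        _ = 2 * (r:ℝ) * (2 * B) * l1 h := sum_abs_pair (2 * B) h
        _ = 4 * (r:ℝ) * B * l1 h := by ring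
    linarith
  -- combine into the main inequality
  have hγS : -(γ * T) ≤ (δ / 4) * l1 h := by
    rw [hTS]
    have h1 : γ * (-S) ≤ γ * |S| := mul_le_mul_of_nonneg_left (neg_le_abs S) hγpos.le
    have h2 : γ * |S| ≤ γ * (4 * (r:ℝ) * B * l1 h) :=
      mul_le_mul_of_nonneg_left hSbound hγpos.le
    have h4 : γ * (4 * (r:ℝ) * B) ≤ δ / 4 := by
      have : γ * (4 * (r:ℝ) * B) = (γ * (16 * (r:ℝ) * B)) / 4 := by ring
      rw [this]; linarith
    have h3 : γ * (4 * (r:ℝ) * B * l1 h) ≤ (δ / 4) * l1 h := by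
      have := mul_le_mul_of_nonneg_right h4 hl1h
      calc γ * (4 * (r:ℝ) * B * l1 h) = (γ * (4 * (r:ℝ) * B)) * l1 h := by ring
        _ ≤ (δ / 4) * l1 h := this
    linarith
  have hcW : 0 ≤ (1 / (2 * (n:ℝ))) * l2sq w := by
    have := l2sq_nonneg' w; positivity
  have hqAh : 0 ≤ (γ / 2) * l2sq (A.mulVec h) := by
    have := l2sq_nonneg' (A.mulVec h); positivity
  have hsplit : (1 / (2 * (n:ℝ))) * (l2sq εt - 2 * ipv + l2sq w)
      = (1 / (2 * (n:ℝ))) * l2sq εt - (1 / (n:ℝ)) * ipv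
        + (1 / (2 * (n:ℝ))) * l2sq w := by
    rw [one_div, one_div, mul_inv]; ring
  have hγT2 : (γ / 2) * (l2sq (A.mulVec βstar) + 2 * T + l2sq (A.mulVec h))
      = (γ / 2) * l2sq (A.mulVec βstar) + γ * T + (γ / 2) * l2sq (A.mulVec h) := by
    ring
  rw [hsplit, hγT2] at hkey
  have hmain : δ * l1 βhat - δ * l1 βstar ≤ (δ / 2) * l1 h := by linarith
  -- cone membership
  simp only [coneC, Set.mem_setOf_eq]
  have hpt : ∀ j, (|((Function.support βstar)ᶜ.indicator h) j|
        - |((Function.support βstar).indicator h) j| ≤ |βhat j| - |βstar j|)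
      ∧ (|h j| = |((Function.support βstar).indicator h) j|
        + |((Function.support βstar)ᶜ.indicator h) j|) := by
    intro j
    by_cases hj : βstar j = 0
    · have hmem : j ∉ Function.support βstar := by simp [Function.mem_support, hj]
      rw [Set.indicator_of_notMem hmem, Set.indicator_of_mem (Set.mem_compl hmem)]
      constructor
      · simp [hh, hj]
      · simp
    · have hmem : j ∈ Function.support βstar := hj
      rw [Set.indicator_of_mem hmem,
        Set.indicator_of_notMem (by simpa using Set.notMem_compl_iff.mpr hmem)]
      have h1 : |βstar j| - |βhat j| ≤ |h j| := by
        calc |βstar j| - |βhat j| ≤ |βstar j - βhat j| := abs_sub_abs_le_abs_sub _ _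
          _ = |βhat j - βstar j| := abs_sub_comm _ _
          _ = |h j| := by rw [hh]
      constructor
      · simp only [abs_zero]
        linarith
      · simp
  have hsum1 : l1 ((Function.support βstar)ᶜ.indicator h)
      - l1 ((Function.support βstar).indicator h) ≤ l1 βhat - l1 βstar := by
    simp only [l1, ← Finset.sum_sub_distrib]
    exact Finset.sum_le_sum fun j _ => (hpt j).1
  have hsum2 : l1 h = l1 ((Function.support βstar).indicator h)
      + l1 ((Function.support βstar)ᶜ.indicator h) := by
    simp only [l1, ← Finset.sum_add_distrib]
    exact Finset.sum_congr rfl fun j _ => (hpt j).2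
  rw [hsum2] at hmain
  have h9 : δ * l1 ((Function.support βstar)ᶜ.indicator h)
      ≤ δ * (3 * l1 ((Function.support βstar).indicator h)) := by
    have h8 := mul_le_mul_of_nonneg_left hsum1 hδpos.le
    nlinarith [h8, hmain]
  exact le_of_mul_le_mul_left h9 hδpos

end
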